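/- arXiv:1805.06951 — 2 statements merged into one kernel-verified Lean document; each statement's English description precedes it below -/
import Mathlib

section
/- Fix σ_x, σ_y > 0, ε ∈ ℝ^n with ε_i > 0, w ∈ ℝ^n, x, b̂ ∈ ℝ^n. The function F(μ, v) = (1/σ_x²)(Σ_i w_i(x_i − b̂_i))μ − (1/2)(1/σ_y² + (1/σ_x²)Σ_i w_i²/ε_i)(μ² + v) + (1/2)log v over μ ∈ ℝ, v > 0 is uniquely maximized at v* = 1/(1/σ_y² + (1/σ_x²)Σ_i w_i²/ε_i) and μ* = (Σ_i w_i(x_i − b̂_i))/(σ_x²/σ_y² + Σ_i w_i²/ε_i). -/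
lemma fm_aux (A C : ℝ) (hC : 0 < C) (μ v : ℝ) (hv : 0 < v)
    (hne : (μ, v) ≠ (A / C, 1 / C)) :
    A * μ - (1/2) * C * (μ ^ 2 + v) + (1/2) * Real.log v
      < A * (A / C) - (1/2) * C * ((A / C) ^ 2 + 1 / C) + (1/2) * Real.log (1 / C) := by
  have hvs : Real.log (1 / C) = - Real.log C := by rw [one_div, Real.log_inv]
  have key : A * μ - (1/2) * C * (μ ^ 2 + v) + (1/2) * Real.log v
      = (A * (A / C) - (1/2) * C * ((A / C) ^ 2 + 1 / C) + (1/2) * Real.log (1 / C))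
        - C / 2 * (μ - A / C) ^ 2 + (1/2) * (Real.log (C * v) - (C * v - 1)) := by
    have hlog : Real.log (C * v) = Real.log C + Real.log v :=
      Real.log_mul hC.ne' hv.ne'
    rw [hlog, hvs]
    field_simp
    ring
  rw [key]
  have hle : Real.log (C * v) ≤ C * v - 1 := Real.log_le_sub_one_of_pos (by positivity)
  by_cases hμ : μ = A / C
  · have hvne : v ≠ 1 / C := fun h => hne (by rw [hμ, h])
    have hcv : C * v ≠ 1 := by
      intro h
      apply hvne
      rw [eq_div_iff hC.ne']
      linear_combination h
    have hlt := Real.log_lt_sub_one_of_pos (by positivity : (0:ℝ) < C * v) hcv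
    nlinarith [sq_nonneg (μ - A / C)]
  · have hd : 0 < (μ - A / C) ^ 2 := by
      have : μ - A / C ≠ 0 := sub_ne_zero.mpr hμ
      positivity
    nlinarith

/-- The FM bound restricted to one Gaussian variational factor `N(μ, v)`,
`F(μ,v) = (1/σx²)(∑ i, w i (x i - bh i)) μ - ½(1/σy² + (1/σx²)∑ i, w i²/ε i)(μ² + v)
+ ½ log v`, is uniquely maximized at
`v* = 1/(1/σy² + (1/σx²)∑ i, w i²/ε i)` and
`μ* = (∑ i, w i (x i - bh i))/(σx²/σy² + ∑ i, w i²/ε i)`. -/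
theorem fm_variational_update {n : ℕ} (σx σy : ℝ) (hσx : 0 < σx) (hσy : 0 < σy)
    (ε w x bh : Fin n → ℝ) (hε : ∀ i, 0 < ε i) :
    ∀ μ v : ℝ, 0 < v →
      (μ, v) ≠ ((∑ i, w i * (x i - bh i)) / (σx ^ 2 / σy ^ 2 + ∑ i, w i ^ 2 / ε i),
                 1 / (1 / σy ^ 2 + (1 / σx ^ 2) * ∑ i, w i ^ 2 / ε i)) →
      (1 / σx ^ 2) * (∑ i, w i * (x i - bh i)) * μ
          - (1 / 2) * (1 / σy ^ 2 + (1 / σx ^ 2) * ∑ i, w i ^ 2 / ε i) * (μ ^ 2 + v)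
          + (1 / 2) * Real.log v
        < (1 / σx ^ 2) * (∑ i, w i * (x i - bh i))
              * ((∑ i, w i * (x i - bh i)) / (σx ^ 2 / σy ^ 2 + ∑ i, w i ^ 2 / ε i))
          - (1 / 2) * (1 / σy ^ 2 + (1 / σx ^ 2) * ∑ i, w i ^ 2 / ε i)
              * (((∑ i, w i * (x i - bh i)) / (σx ^ 2 / σy ^ 2 + ∑ i, w i ^ 2 / ε i)) ^ 2
                + 1 / (1 / σy ^ 2 + (1 / σx ^ 2) * ∑ i, w i ^ 2 / ε i))
          + (1 / 2) * Real.log (1 / (1 / σy ^ 2 + (1 / σx ^ 2) * ∑ i, w i ^ 2 / ε i)) := by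
  intro μ v hv hne
  have hS0 : 0 ≤ ∑ i, w i ^ 2 / ε i :=
    Finset.sum_nonneg fun i _ => div_nonneg (sq_nonneg _) (hε i).le
  have hx2 : (0:ℝ) < σx ^ 2 := by positivity
  have hy2 : (0:ℝ) < σy ^ 2 := by positivity
  have hC0 : 0 < 1 / σy ^ 2 + (1 / σx ^ 2) * ∑ i, w i ^ 2 / ε i := by positivity
  have hμeq : (∑ i, w i * (x i - bh i)) / (σx ^ 2 / σy ^ 2 + ∑ i, w i ^ 2 / ε i)
      = ((1 / σx ^ 2) * ∑ i, w i * (x i - bh i))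
        / (1 / σy ^ 2 + (1 / σx ^ 2) * ∑ i, w i ^ 2 / ε i) := by
    have hc : (1:ℝ) / σx ^ 2 ≠ 0 := by positivity
    have hd2 : (1 / σy ^ 2 + (1 / σx ^ 2) * ∑ i, w i ^ 2 / ε i : ℝ)
        = (1 / σx ^ 2) * (σx ^ 2 / σy ^ 2 + ∑ i, w i ^ 2 / ε i) := by
      field_simp
    rw [hd2, mul_div_mul_left _ _ hc]
  rw [hμeq] at hne ⊢
  exact fm_aux _ _ hC0 μ v hv hne
end

section
/- In the Gaussian FM update, if for coordinate j we have ε_{ij} = 1 for all i with w_{ij} ≠ 0, then the FM update for μ_j coincides with the exact coordinate ascent (CAVI) update: μ_j* = (Σ_i w_{ij}(x_i − b_i − Σ_{j'≠j} w_{ij'} μ_{j'}))/(σ_x²/σ_y² + Σ_i w_{ij}²). -/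
/-- If `ε i j = 1` for every `i` with `w i j ≠ 0`, the Gaussian FM update for
coordinate `j` coincides with the exact CAVI coordinate update. -/
theorem fm_update_eq_cavi {n m : ℕ} (σx σy : ℝ) (hσx : 0 < σx) (hσy : 0 < σy)
    (w : Fin n → Fin m → ℝ) (x b : Fin n → ℝ) (μ : Fin m → ℝ)
    (ε : Fin n → Fin m → ℝ) (j : Fin m)
    (hε0 : ∀ i, 0 < ε i j) (hε1 : ∀ i, w i j ≠ 0 → ε i j = 1)
    (etaBar bh : Fin n → ℝ)
    (hη : ∀ i, etaBar i = b i + ∑ j', w i j' * μ j')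
    (hbh : ∀ i, bh i = etaBar i - w i j * μ j / ε i j) :
    (∑ i, w i j * (x i - bh i)) / (σx ^ 2 / σy ^ 2 + ∑ i, (w i j) ^ 2 / ε i j)
      = (∑ i, w i j * (x i - b i - ∑ j' ∈ Finset.univ.erase j, w i j' * μ j'))
          / (σx ^ 2 / σy ^ 2 + ∑ i, (w i j) ^ 2) := by
  have hnum : (∑ i, w i j * (x i - bh i))
      = ∑ i, w i j * (x i - b i - ∑ j' ∈ Finset.univ.erase j, w i j' * μ j') := by
    refine Finset.sum_congr rfl fun i _ => ?_
    by_cases hw : w i j = 0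
    · simp [hw]
    · have hε := hε1 i hw
      have hsplit : (∑ j', w i j' * μ j')
          = w i j * μ j + ∑ j' ∈ Finset.univ.erase j, w i j' * μ j' := by
        rw [← Finset.add_sum_erase _ _ (Finset.mem_univ j)]
      rw [hbh, hη, hε, hsplit]
      ring
  have hden : (∑ i, (w i j) ^ 2 / ε i j) = ∑ i, (w i j) ^ 2 := by
    refine Finset.sum_congr rfl fun i _ => ?_
    by_cases hw : w i j = 0
    · simp [hw]
    · rw [hε1 i hw, div_one]
  rw [hnum, hden]
end
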